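/- arXiv:math/0608116 — 2 statements merged into one kernel-verified Lean document; each statement's English description precedes it below -/
import Mathlib

section
/- Let B be a Boolean algebra, S a finite subset of B closed under meet ⊓ and containing ⊤, and □ : B → B a map satisfying the modal axioms (m.i) and (m.ii). Then the basic propositional assignments are exhaustive: for every φ ∈ S, ⊔_{ψ∈S, ψ≤φ} ψ^□ = □φ; in particular, ⊔_{ψ∈S} ψ^□ = ⊤. -/
open scoped Classical

/-- The basic propositional assignment (bpa) of `φ`:
`φ^□ = □φ ⊓ (⊔_{ψ ∈ S, ψ < φ} □ψ)ᶜ`. -/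
noncomputable def bpa {B : Type*} [BooleanAlgebra B]
    (S : Finset B) (box : B → B) (φ : B) : B :=
  box φ ⊓ ((S.filter fun ψ => ψ < φ).sup box)ᶜ

/-- The basic propositional assignments are exhaustive:
`⊔_{ψ ∈ S, ψ ≤ φ} ψ^□ = □φ` for every `φ ∈ S`; in particular `⊔_{ψ ∈ S} ψ^□ = ⊤`. -/
theorem bpa_exhaustive {B : Type*} [BooleanAlgebra B]
    (S : Finset B)
    (hmeet : ∀ x ∈ S, ∀ y ∈ S, x ⊓ y ∈ S)
    (htop : ⊤ ∈ S)
    (box : B → B)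
    (mi : box ⊤ = ⊤)
    (mii : ∀ x y : B, box (xᶜ ⊔ y) ≤ (box x)ᶜ ⊔ box y) :
    (∀ φ ∈ S, (S.filter fun ψ => ψ ≤ φ).sup (bpa S box) = box φ) ∧
      S.sup (bpa S box) = ⊤ := by
  -- monotonicity of box
  have mono : ∀ x y : B, x ≤ y → box x ≤ box y := by
    intro x y hxy
    have h1 : xᶜ ⊔ y = ⊤ := top_le_iff.mp (by
      calc (⊤ : B) = xᶜ ⊔ x := (compl_sup_eq_top).symm
        _ ≤ xᶜ ⊔ y := sup_le_sup_left hxy _)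
    have h2 := mii x y
    rw [h1, mi] at h2
    have h3 : (box x)ᶜ ⊔ box y = ⊤ := top_le_iff.mp h2
    calc box x = box x ⊓ ((box x)ᶜ ⊔ box y) := by rw [h3, inf_top_eq]
      _ = (box x ⊓ (box x)ᶜ) ⊔ (box x ⊓ box y) := inf_sup_left _ _ _
      _ ≤ box y := by simp
  have key : ∀ n : ℕ, ∀ φ ∈ S, (S.filter fun ψ => ψ < φ).card ≤ n →
      (S.filter fun ψ => ψ ≤ φ).sup (bpa S box) = box φ := by
    intro n
    induction n with
    | zero =>
      intro φ hφ hc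
      have hempty : (S.filter fun ψ => ψ < φ) = ∅ :=
        Finset.card_eq_zero.mp (Nat.le_zero.mp hc)
      apply le_antisymm
      · exact Finset.sup_le fun ψ hψ =>
          le_trans inf_le_left (mono _ _ (Finset.mem_filter.mp hψ).2)
      · calc box φ = bpa S box φ := by unfold bpa; rw [hempty]; simp
          _ ≤ _ := Finset.le_sup (show φ ∈ S.filter fun ψ => ψ ≤ φ from Finset.mem_filter.mpr ⟨hφ, le_refl φ⟩)
    | succ n ih =>
      intro φ hφ hc
      apply le_antisymm
      · exact Finset.sup_le fun ψ hψ =>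
          le_trans inf_le_left (mono _ _ (Finset.mem_filter.mp hψ).2)
      · have hsplit : box φ =
            bpa S box φ ⊔ (box φ ⊓ (S.filter fun ψ => ψ < φ).sup box) := by
          unfold bpa
          rw [← inf_sup_left, compl_sup_eq_top, inf_top_eq]
        rw [hsplit]
        apply sup_le
        · exact Finset.le_sup (show φ ∈ S.filter fun ψ => ψ ≤ φ from Finset.mem_filter.mpr ⟨hφ, le_refl φ⟩)
        · refine le_trans inf_le_right (Finset.sup_le ?_)
          intro ψ hψ
          obtain ⟨hψS, hψφ⟩ := Finset.mem_filter.mp hψ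
          have hsub : (S.filter fun χ => χ < ψ) ⊆ (S.filter fun χ => χ < φ) := by
            intro χ hχ
            obtain ⟨hχS, hχψ⟩ := Finset.mem_filter.mp hχ
            exact Finset.mem_filter.mpr ⟨hχS, lt_trans hχψ hψφ⟩
          have hss : (S.filter fun χ => χ < ψ) ⊂ (S.filter fun χ => χ < φ) :=
            (Finset.ssubset_iff_of_subset hsub).mpr
              ⟨ψ, Finset.mem_filter.mpr ⟨hψS, hψφ⟩,
                fun h => lt_irrefl ψ (Finset.mem_filter.mp h).2⟩
          have hcard : (S.filter fun χ => χ < ψ).card ≤ n := by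
            have := Finset.card_lt_card hss
            omega
          rw [← ih ψ hψS hcard]
          apply Finset.sup_mono
          intro χ hχ
          obtain ⟨hχS, hχψ⟩ := Finset.mem_filter.mp hχ
          exact Finset.mem_filter.mpr ⟨hχS, le_trans hχψ hψφ.le⟩
  have main : ∀ φ ∈ S, (S.filter fun ψ => ψ ≤ φ).sup (bpa S box) = box φ :=
    fun φ hφ => key _ φ hφ le_rfl
  refine ⟨main, ?_⟩
  have h := main ⊤ htop
  rw [Finset.filter_true_of_mem (fun x _ => le_top)] at h
  rw [h, mi]
end

section
/- Let B be a Boolean algebra, S a finite subset of B closed under meet ⊓ and containing ⊤, and let □ᵢ, □ⱼ, □ᵢⱼ : B → B all satisfy the modal axioms (m.i) and (m.ii), axiom (m.iv) (□ᵢ x ≤ □ᵢⱼ x and □ⱼ x ≤ □ᵢⱼ x for all x ∈ B) and the independence axiom (m.indep) (□ᵢⱼ x ≤ □ᵢ x ⊔ □ⱼ x for all x ∈ B). Then for every φ ∈ S, □ᵢⱼ φ = ⊔_{ψ,η∈S: ψ⊓η ≤ φ} (□ᵢψ ⊓ □ⱼη) = ⊔_{ψ,η∈S: ψ⊓η ≤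 φ} (ψ^{□ᵢ} ⊓ η^{□ⱼ}). -/
open scoped Classical

section aux
variable {B : Type*} [BooleanAlgebra B]

lemma compl_sup_top_of_le {x y : B} (h : x ≤ y) : xᶜ ⊔ y = ⊤ := by
  rw [sup_comm, ← himp_eq, himp_eq_top_iff]; exact h

lemma box_mono' (box : B → B) (mi : box ⊤ = ⊤)
    (mii : ∀ x y : B, box (xᶜ ⊔ y) ≤ (box x)ᶜ ⊔ box y)
    {x y : B} (h : x ≤ y) : box x ≤ box y := by
  have h1 : (⊤ : B) ≤ (box x)ᶜ ⊔ box y := by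
    have := mii x y
    rwa [compl_sup_top_of_le h, mi] at this
  have h2 : (box x)ᶜ ⊔ box y = ⊤ := top_le_iff.mp h1
  calc box x = box x ⊓ ((box x)ᶜ ⊔ box y) := by rw [h2, inf_top_eq]
    _ = (box x ⊓ (box x)ᶜ) ⊔ (box x ⊓ box y) := inf_sup_left _ _ _
    _ ≤ box y := by simp

lemma box_inf' (box : B → B) (mi : box ⊤ = ⊤)
    (mii : ∀ x y : B, box (xᶜ ⊔ y) ≤ (box x)ᶜ ⊔ box y)
    (x y : B) : box x ⊓ box y ≤ box (x ⊓ y) := by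
  have hx : x ≤ yᶜ ⊔ (x ⊓ y) := by
    have : x = (x ⊓ yᶜ) ⊔ (x ⊓ y) := by
      rw [← inf_sup_left, compl_sup_eq_top, inf_top_eq]
    calc x = (x ⊓ yᶜ) ⊔ (x ⊓ y) := this
      _ ≤ yᶜ ⊔ (x ⊓ y) := sup_le_sup inf_le_right le_rfl
  have h1 : box x ≤ (box y)ᶜ ⊔ box (x ⊓ y) :=
    le_trans (box_mono' box mi mii hx) (mii y (x ⊓ y))
  calc box x ⊓ box y ≤ ((box y)ᶜ ⊔ box (x ⊓ y)) ⊓ box y :=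
        inf_le_inf_right _ h1
    _ = ((box y)ᶜ ⊓ box y) ⊔ (box (x ⊓ y) ⊓ box y) := inf_sup_right _ _ _
    _ ≤ box (x ⊓ y) := by simp

lemma box_decomp' (S : Finset B) (box : B → B) (mi : box ⊤ = ⊤)
    (mii : ∀ x y : B, box (xᶜ ⊔ y) ≤ (box x)ᶜ ⊔ box y) :
    ∀ φ ∈ S, box φ = (S.filter fun ψ => ψ ≤ φ).sup (bpa S box) := by
  suffices key : ∀ n : ℕ, ∀ φ ∈ S, (S.filter fun ψ => ψ < φ).card < n →
      box φ = (S.filter fun ψ => ψ ≤ φ).sup (bpa S box) by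
    intro φ hφ
    exact key ((S.filter fun ψ => ψ < φ).card + 1) φ hφ (Nat.lt_succ_self _)
  intro n
  induction n with
  | zero => intro φ _ h; omega
  | succ n ih =>
    intro φ hφ hcard
    apply le_antisymm
    · -- box φ ≤ sup of bpas
      set c := (S.filter fun ψ => ψ < φ).sup box with hc
      have h1 : box φ ≤ bpa S box φ ⊔ c := by
        have : bpa S box φ ⊔ c = (box φ ⊔ c) ⊓ (cᶜ ⊔ c) := by
          rw [bpa, sup_inf_right]
        rw [this, compl_sup_eq_top, inf_top_eq]
        exact le_sup_left
      refine le_trans h1 (sup_le ?_ ?_)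
      · exact Finset.le_sup (by simp [hφ])
      · apply Finset.sup_le
        intro ψ hψ
        simp only [Finset.mem_filter] at hψ
        obtain ⟨hψS, hψφ⟩ := hψ
        have hsub : (S.filter fun χ => χ < ψ) ⊂ (S.filter fun χ => χ < φ) := by
          refine Finset.ssubset_iff_of_subset ?_ |>.mpr ⟨ψ, by simp [hψS, hψφ], by simp⟩
          intro χ hχ
          simp only [Finset.mem_filter] at hχ ⊢
          exact ⟨hχ.1, lt_trans hχ.2 hψφ⟩
        have : (S.filter fun χ => χ < ψ).card < n := by
          have := Finset.card_lt_card hsub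
          omega
        rw [ih ψ hψS this]
        apply Finset.sup_le
        intro χ hχ
        simp only [Finset.mem_filter] at hχ
        exact Finset.le_sup (by simp [hχ.1, le_trans hχ.2 hψφ.le])
    · apply Finset.sup_le
      intro ψ hψ
      simp only [Finset.mem_filter] at hψ
      exact le_trans inf_le_left (box_mono' box mi mii hψ.2)

end aux

/-- For independent sensors,
`□ᵢⱼ φ = ⊔_{ψ⊓η ≤ φ} (□ᵢψ ⊓ □ⱼη) = ⊔_{ψ⊓η ≤ φ} (ψ^{□ᵢ} ⊓ η^{□ⱼ})`. -/
theorem box_fused_eq_sup {B : Type*} [BooleanAlgebra B]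
    (S : Finset B)
    (hmeet : ∀ x ∈ S, ∀ y ∈ S, x ⊓ y ∈ S)
    (htop : ⊤ ∈ S)
    (boxI boxJ boxIJ : B → B)
    (miI : boxI ⊤ = ⊤)
    (miiI : ∀ x y : B, boxI (xᶜ ⊔ y) ≤ (boxI x)ᶜ ⊔ boxI y)
    (miJ : boxJ ⊤ = ⊤)
    (miiJ : ∀ x y : B, boxJ (xᶜ ⊔ y) ≤ (boxJ x)ᶜ ⊔ boxJ y)
    (miIJ : boxIJ ⊤ = ⊤)
    (miiIJ : ∀ x y : B, boxIJ (xᶜ ⊔ y) ≤ (boxIJ x)ᶜ ⊔ boxIJ y)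
    (mivI : ∀ x : B, boxI x ≤ boxIJ x)
    (mivJ : ∀ x : B, boxJ x ≤ boxIJ x)
    (mindep : ∀ x : B, boxIJ x ≤ boxI x ⊔ boxJ x) :
    ∀ φ ∈ S,
      boxIJ φ =
          ((S ×ˢ S).filter fun q => q.1 ⊓ q.2 ≤ φ).sup (fun q => boxI q.1 ⊓ boxJ q.2) ∧
        boxIJ φ =
          ((S ×ˢ S).filter fun q => q.1 ⊓ q.2 ≤ φ).sup
            (fun q => bpa S boxI q.1 ⊓ bpa S boxJ q.2) := by
  intro φ hφ
  have h1 : boxIJ φ =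
      ((S ×ˢ S).filter fun q => q.1 ⊓ q.2 ≤ φ).sup (fun q => boxI q.1 ⊓ boxJ q.2) := by
    apply le_antisymm
    · refine le_trans (mindep φ) (sup_le ?_ ?_)
      · have hmem : (φ, (⊤ : B)) ∈ (S ×ˢ S).filter fun q => q.1 ⊓ q.2 ≤ φ := by
          simp [hφ, htop]
        calc boxI φ = boxI φ ⊓ boxJ ⊤ := by rw [miJ, inf_top_eq]
          _ ≤ _ := Finset.le_sup (f := fun q => boxI q.1 ⊓ boxJ q.2) hmem
      · have hmem : ((⊤ : B), φ) ∈ (S ×ˢ S).filter fun q => q.1 ⊓ q.2 ≤ φ := by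
          simp [hφ, htop]
        calc boxJ φ = boxI ⊤ ⊓ boxJ φ := by rw [miI, top_inf_eq]
          _ ≤ _ := Finset.le_sup (f := fun q => boxI q.1 ⊓ boxJ q.2) hmem
    · apply Finset.sup_le
      intro q hq
      simp only [Finset.mem_filter, Finset.mem_product] at hq
      calc boxI q.1 ⊓ boxJ q.2 ≤ boxIJ q.1 ⊓ boxIJ q.2 :=
            inf_le_inf (mivI _) (mivJ _)
        _ ≤ boxIJ (q.1 ⊓ q.2) := box_inf' boxIJ miIJ miiIJ _ _
        _ ≤ boxIJ φ := box_mono' boxIJ miIJ miiIJ hq.2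
  refine ⟨h1, ?_⟩
  rw [h1]
  apply le_antisymm
  · apply Finset.sup_le
    intro q hq
    simp only [Finset.mem_filter, Finset.mem_product] at hq
    rw [box_decomp' S boxI miI miiI q.1 hq.1.1,
        box_decomp' S boxJ miJ miiJ q.2 hq.1.2,
        Finset.sup_inf_distrib_right]
    apply Finset.sup_le
    intro ψ hψ
    rw [Finset.sup_inf_distrib_left]
    apply Finset.sup_le
    intro η hη
    simp only [Finset.mem_filter] at hψ hη
    have hmem : (ψ, η) ∈ (S ×ˢ S).filter fun q' => q'.1 ⊓ q'.2 ≤ φ := by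
      simp only [Finset.mem_filter, Finset.mem_product]
      exact ⟨⟨hψ.1, hη.1⟩, le_trans (inf_le_inf hψ.2 hη.2) hq.2⟩
    exact Finset.le_sup (f := fun q => bpa S boxI q.1 ⊓ bpa S boxJ q.2) hmem
  · apply Finset.sup_le
    intro q hq
    exact le_trans (inf_le_inf inf_le_left inf_le_left)
      (Finset.le_sup (f := fun q => boxI q.1 ⊓ boxJ q.2) hq)
end
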